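/- Let G^0,…,G^L be linear maps and let h(Θ) := Σ_l ‖G^l W^l‖₁ + ν Σ_l ‖Π_l W^l‖₁ for Θ = (W^L,…,W^0), where Π_l is the projection onto ker(G^l). Let Ḡ^l denote the restriction of G^l to ker(G^l)^⊥ (an injective map onto the image), and M := max_l ‖(Ḡ^l)^{-1}‖_{1→1}. If h(Θ) ≤ 1 then Σ_{l=0}^{L} ‖W^l‖₁ ≤ M + 1/ν. -/

import Mathlib

/-- The entrywise `ℓ₁`-norm of a matrix. -/
noncomputable def ent1 {m n : Type*} [Fintype m] [Fintype n] (A : Matrix m n ℝ) : ℝ :=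
  ∑ i, ∑ j, |A i j|

/-- The `ℓ₁→ℓ₁` induced operator norm of a matrix: `sup_{x ≠ 0} ‖Bx‖₁ / ‖x‖₁`. -/
noncomputable def op11 {m n : Type*} [Fintype m] [Fintype n] (B : Matrix m n ℝ) : ℝ :=
  sSup {r : ℝ | ∃ x : n → ℝ, x ≠ 0 ∧ r = (∑ i, |B.mulVec x i|) / (∑ j, |x j|)}

lemma ent1_nonneg {m n : Type*} [Fintype m] [Fintype n] (A : Matrix m n ℝ) : 0 ≤ ent1 A :=
  Finset.sum_nonneg fun _ _ => Finset.sum_nonneg fun _ _ => abs_nonneg _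

lemma op11_nonneg {m n : Type*} [Fintype m] [Fintype n] (B : Matrix m n ℝ) : 0 ≤ op11 B := by
  apply Real.sSup_nonneg
  rintro r ⟨x, hx, rfl⟩
  exact div_nonneg (Finset.sum_nonneg fun _ _ => abs_nonneg _)
    (Finset.sum_nonneg fun _ _ => abs_nonneg _)

lemma abs_sum_pos {n : Type*} [Fintype n] {x : n → ℝ} (hx : x ≠ 0) : 0 < ∑ j, |x j| := by
  rcases Function.ne_iff.mp hx with ⟨j, hj⟩
  exact Finset.sum_pos' (fun _ _ => abs_nonneg _) ⟨j, Finset.mem_univ j, abs_pos.mpr hj⟩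

lemma op11_bdd {m n : Type*} [Fintype m] [Fintype n] (B : Matrix m n ℝ) :
    BddAbove {r : ℝ | ∃ x : n → ℝ, x ≠ 0 ∧ r = (∑ i, |B.mulVec x i|) / (∑ j, |x j|)} := by
  refine ⟨∑ j, ∑ i, |B i j|, ?_⟩
  rintro r ⟨x, hx, rfl⟩
  rw [div_le_iff₀ (abs_sum_pos hx)]
  calc ∑ i, |B.mulVec x i| ≤ ∑ i, ∑ j, |B i j| * |x j| := by
        apply Finset.sum_le_sum; intro i _
        simp only [Matrix.mulVec, dotProduct]
        calc |∑ j, B i j * x j| ≤ ∑ j, |B i j * x j| := Finset.abs_sum_le_sum_abs _ _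
          _ = ∑ j, |B i j| * |x j| := by simp [abs_mul]
    _ = ∑ j, (∑ i, |B i j|) * |x j| := by rw [Finset.sum_comm]; simp [Finset.sum_mul]
    _ ≤ ∑ j, (∑ j', ∑ i, |B i j'|) * |x j| := by
        apply Finset.sum_le_sum; intro j _
        exact mul_le_mul_of_nonneg_right
          (Finset.single_le_sum (f := fun j' => ∑ i, |B i j'|)
            (fun j' _ => Finset.sum_nonneg fun _ _ => abs_nonneg _)
            (Finset.mem_univ j)) (abs_nonneg _)
    _ = (∑ j, ∑ i, |B i j|) * ∑ j, |x j| := by rw [← Finset.mul_sum]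

lemma mulVec_col_bound {m n : Type*} [Fintype m] [Fintype n] (B : Matrix m n ℝ) (x : n → ℝ) :
    ∑ i, |B.mulVec x i| ≤ op11 B * ∑ j, |x j| := by
  by_cases hx : x = 0
  · simp [hx, Matrix.mulVec_zero]
  · have hden := abs_sum_pos hx
    have hmem : (∑ i, |B.mulVec x i|) / (∑ j, |x j|) ∈
        {r : ℝ | ∃ x : n → ℝ, x ≠ 0 ∧ r = (∑ i, |B.mulVec x i|) / (∑ j, |x j|)} :=
      ⟨x, hx, rfl⟩
    have h := le_csSup (op11_bdd B) hmem
    rw [div_le_iff₀ hden] at h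
    exact h

lemma ent1_mul_le {m n k : Type*} [Fintype m] [Fintype n] [Fintype k]
    (B : Matrix m n ℝ) (A : Matrix n k ℝ) : ent1 (B * A) ≤ op11 B * ent1 A := by
  unfold ent1
  rw [Finset.sum_comm]
  calc ∑ j, ∑ i, |(B * A) i j|
      = ∑ j : k, ∑ i, |B.mulVec (fun i' => A i' j) i| := by
        apply Finset.sum_congr rfl; intro j _
        apply Finset.sum_congr rfl; intro i _
        rw [Matrix.mul_apply]; rfl
    _ ≤ ∑ j : k, op11 B * ∑ i, |A i j| := by
        apply Finset.sum_le_sum; intro j _; exact mulVec_col_bound B _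
    _ = op11 B * ∑ i, ∑ j, |A i j| := by rw [← Finset.mul_sum, Finset.sum_comm]

lemma ent1_add_le {m n : Type*} [Fintype m] [Fintype n] (A C : Matrix m n ℝ) :
    ent1 (A + C) ≤ ent1 A + ent1 C := by
  unfold ent1
  rw [← Finset.sum_add_distrib]
  apply Finset.sum_le_sum; intro i _
  rw [← Finset.sum_add_distrib]
  apply Finset.sum_le_sum; intro j _
  exact abs_add_le _ _

/-- let `h(Θ) = Σ_l ‖G^l W^l‖₁ + ν Σ_l ‖Π_l W^l‖₁` where `Π_l` is the
projection onto `ker G^l` (so `G^l Π_l = 0`, `Π_l² = Π_l`) and `H^l` is the inverse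
`(Ḡ^l)⁻¹` of the restriction of `G^l` to `(ker G^l)^⊥` (so `H^l G^l = 1 − Π_l`).
With `M = max_l ‖(Ḡ^l)⁻¹‖_{1→1}`, if `h(Θ) ≤ 1` then `Σ_l ‖W^l‖₁ ≤ M + 1/ν`. -/
theorem stmt7 (L : ℕ) (p q : ℕ → ℕ)
    (W : ∀ l : Fin (L + 1), Matrix (Fin (p (l.val + 1))) (Fin (p l.val)) ℝ)
    (G : ∀ l : Fin (L + 1), Matrix (Fin (q l.val)) (Fin (p (l.val + 1))) ℝ)
    (P : ∀ l : Fin (L + 1), Matrix (Fin (p (l.val + 1))) (Fin (p (l.val + 1))) ℝ)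
    (H : ∀ l : Fin (L + 1), Matrix (Fin (p (l.val + 1))) (Fin (q l.val)) ℝ)
    (hProj : ∀ l, P l * P l = P l)
    (hGP : ∀ l, G l * P l = 0)
    (hHG : ∀ l, H l * G l = 1 - P l)
    (ν M : ℝ) (hν : 0 < ν)
    (hM : M = ⨆ l : Fin (L + 1), op11 (H l))
    (hΘ : (∑ l, ent1 (G l * W l)) + ν * ∑ l, ent1 (P l * W l) ≤ 1) :
    ∑ l, ent1 (W l) ≤ M + 1 / ν := by
  have hMl : ∀ l, op11 (H l) ≤ M := by
    intro l
    rw [hM]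
    exact le_ciSup (f := fun l => op11 (H l)) (Set.Finite.bddAbove (Set.finite_range _)) l
  have hM0 : 0 ≤ M := le_trans (op11_nonneg (H 0)) (hMl 0)
  have key : ∀ l, ent1 (W l) ≤ M * ent1 (G l * W l) + ent1 (P l * W l) := by
    intro l
    have hdecomp : W l = H l * (G l * W l) + P l * W l := by
      rw [← Matrix.mul_assoc, hHG l, Matrix.sub_mul, Matrix.one_mul, sub_add_cancel]
    calc ent1 (W l) ≤ ent1 (H l * (G l * W l)) + ent1 (P l * W l) := by
          conv_lhs => rw [hdecomp]
          exact ent1_add_le _ _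
      _ ≤ op11 (H l) * ent1 (G l * W l) + ent1 (P l * W l) := by
          exact add_le_add_left (ent1_mul_le _ _) _
      _ ≤ M * ent1 (G l * W l) + ent1 (P l * W l) :=
          add_le_add_left (mul_le_mul_of_nonneg_right (hMl l) (ent1_nonneg _)) _
  set A := ∑ l, ent1 (G l * W l) with hA
  set B := ∑ l, ent1 (P l * W l) with hB
  have hA0 : 0 ≤ A := Finset.sum_nonneg fun _ _ => ent1_nonneg _
  have hB0 : 0 ≤ B := Finset.sum_nonneg fun _ _ => ent1_nonneg _
  have hA1 : A ≤ 1 := by nlinarith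
  have hB1 : B ≤ 1 / ν := by rw [le_div_iff₀ hν]; nlinarith
  calc ∑ l, ent1 (W l) ≤ ∑ l, (M * ent1 (G l * W l) + ent1 (P l * W l)) :=
        Finset.sum_le_sum fun l _ => key l
    _ = M * A + B := by rw [Finset.sum_add_distrib, Finset.mul_sum]
    _ ≤ M * 1 + 1 / ν := add_le_add (mul_le_mul_of_nonneg_left hA1 hM0) hB1
    _ = M + 1 / ν := by ring
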